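/- Let d ≥ 3 and N ≥ 1 be integers and let ℓ_d, ℓ_{d+1} be nonnegative integers with ℓ_d ≤ N, ℓ_{d+1} ≤ N and ℓ_d + ℓ_{d+1} ≥ N. Then |H^d(N,…,N,ℓ_d,ℓ_{d+1},N)| = C(N+d, d) − C(N−ℓ_d+d−1, d) − C(N−ℓ_{d+1}+d−1, d), where the first d−1 parameters equal N and C(a,b) denotes the binomial coefficient (equal to 0 when a < b). -/

import Mathlib

open Finset

/-- `|ν^{j+1}| = ν_{j+1} + ⋯ + ν_d` (1-indexed). -/
def tailSum (d : ℕ) (ν : Fin d → ℕ) (j : Fin d) : ℕ :=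
  ∑ i ∈ Finset.univ.filter (fun i : Fin d => (j : ℕ) < (i : ℕ)), ν i

/-- `|ℓ^{j+1}| = ℓ_{j+1} + ⋯ + ℓ_{d+1}` (1-indexed). -/
def tailSumL (d : ℕ) (ℓ : Fin (d + 1) → ℕ) (j : Fin d) : ℕ :=
  ∑ i ∈ Finset.univ.filter (fun i : Fin (d + 1) => (j : ℕ) < (i : ℕ)), ℓ i

/-- The set `H^d(ℓ₁,…,ℓ_{d+1},N)`. -/
def Hd (d N : ℕ) (ℓ : Fin (d + 1) → ℕ) : Finset (Fin d → ℕ) :=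
  (Fintype.piFinset fun _ : Fin d => Finset.range (N + 1)).filter fun ν =>
    (∀ j : Fin d, ν j ≤ ℓ j.castSucc) ∧
    (∀ j : Fin d, ν j + 2 * tailSum d ν j ≤ tailSumL d ℓ j) ∧
    (∑ i, ν i) + N ≤ ∑ i, ℓ i ∧ (∑ i, ν i) ≤ N


def Tset (d M : ℕ) : Finset (Fin d → ℕ) :=
  (Fintype.piFinset fun _ : Fin d => Finset.range (M + 1)).filter fun ν => ∑ i, ν i ≤ M

lemma mem_Tset {d M : ℕ} {ν : Fin d → ℕ} : ν ∈ Tset d M ↔ ∑ i, ν i ≤ M := by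
  simp only [Tset, mem_filter, Fintype.mem_piFinset, mem_range]
  constructor
  · tauto
  · intro h
    refine ⟨fun i => ?_, h⟩
    have := Finset.single_le_sum (f := ν) (fun i _ => Nat.zero_le _) (mem_univ i)
    omega

lemma two_le_sum {n : ℕ} (f : Fin n → ℕ) (a b : Fin n) (hab : a ≠ b) :
    f a + f b ≤ ∑ i, f i := by
  calc f a + f b = ∑ i ∈ ({a, b} : Finset (Fin n)), f i := by
        rw [sum_insert (by simpa using hab), sum_singleton]
    _ ≤ ∑ i, f i := sum_le_sum_of_subset (subset_univ _)

lemma three_le_sum' {n : ℕ} (s : Finset (Fin n)) (f : Fin n → ℕ) (a b c : Fin n)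
    (ha : a ∈ s) (hb : b ∈ s) (hc : c ∈ s) (hab : a ≠ b) (hac : a ≠ c) (hbc : b ≠ c) :
    f a + f b + f c ≤ ∑ i ∈ s, f i := by
  have hsub : ({a, b, c} : Finset (Fin n)) ⊆ s := by
    intro x hx
    simp only [mem_insert, mem_singleton] at hx
    rcases hx with rfl | rfl | rfl <;> assumption
  calc f a + f b + f c = ∑ i ∈ ({a, b, c} : Finset (Fin n)), f i := by
        rw [sum_insert (by simp [hab, hac]), sum_insert (by simpa using hbc), sum_singleton, add_assoc]
    _ ≤ ∑ i ∈ s, f i := sum_le_sum_of_subset hsub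

lemma sum_update_eq {n : ℕ} (f : Fin n → ℕ) (a : Fin n) (x : ℕ) :
    ∑ i, Function.update f a x i + f a = ∑ i, f i + x := by
  rw [Finset.sum_update_of_mem (mem_univ a), ← Finset.add_sum_erase _ f (mem_univ a),
    Finset.erase_eq]
  ring

lemma sum_update2_eq {n : ℕ} (f : Fin n → ℕ) (a b : Fin n) (hab : a ≠ b) (x y : ℕ) :
    ∑ i, Function.update (Function.update f a x) b y i + (f a + f b) = ∑ i, f i + (x + y) := by
  have h1 := sum_update_eq (Function.update f a x) b y
  have h2 := sum_update_eq f a x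
  rw [Function.update_of_ne hab.symm] at h1
  omega

lemma hockey (d : ℕ) : ∀ M, ∑ v ∈ range (M + 1), (M - v + d).choose d
    = (M + d + 1).choose (d + 1) := by
  intro M
  induction M with
  | zero => simp
  | succ M ih =>
    rw [Finset.sum_range_succ']
    have hc : ∀ v ∈ range (M + 1), (M + 1 - (v + 1) + d).choose d = (M - v + d).choose d :=
      fun v _ => by congr 1; omega
    rw [Finset.sum_congr rfl hc, ih, show (M + 1 - 0 + d) = M + d + 1 from by omega,
      show M + 1 + d + 1 = (M + d + 1) + 1 from by omega]
    have hp : ((M + d + 1) + 1).choose (d + 1) = (M + d + 1).choose d + (M + d + 1).choose (d + 1) :=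
      Nat.choose_succ_succ _ _
    omega

lemma Tcard : ∀ (d M : ℕ), (Tset d M).card = (M + d).choose d := by
  intro d
  induction d with
  | zero =>
    intro M
    rw [Tset, Finset.filter_true_of_mem (by simp)]
    simp [Fintype.card_piFinset]
  | succ d ih =>
    intro M
    rw [Finset.card_eq_sum_card_fiberwise (f := fun ν => ν 0) (t := range (M + 1))
      (fun ν hν => by
        rw [Finset.mem_coe, mem_Tset] at hν
        have := Finset.single_le_sum (f := ν) (fun i _ => Nat.zero_le _) (mem_univ 0)
        simp only [Finset.mem_coe, mem_range]; omega)]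
    have h1 : ∀ v ∈ range (M + 1),
        ((Tset (d + 1) M).filter fun ν => ν 0 = v).card = (M - v + d).choose d := by
      intro v hv
      rw [mem_range] at hv
      rw [← ih (M - v)]
      refine Finset.card_bij' (fun ν _ => Fin.tail ν) (fun μ _ => Fin.cons v μ) ?_ ?_ ?_ ?_
      · intro ν hν
        simp only [mem_filter, mem_Tset] at hν
        rw [mem_Tset]
        show ∑ i : Fin d, ν i.succ ≤ M - v
        have h := Fin.sum_univ_succ ν
        omega
      · intro μ hμ
        rw [mem_Tset] at hμ
        rw [mem_filter, mem_Tset, Fin.sum_cons]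
        exact ⟨by omega, by simp⟩
      · intro ν hν
        rw [mem_filter] at hν
        have h := Fin.cons_self_tail ν
        rw [hν.2] at h
        exact h
      · intro μ hμ
        simp [Fin.tail_cons]
    rw [Finset.sum_congr rfl h1, hockey]
    congr 1

set_option maxHeartbeats 2000000 in
/-- Lemma 5.3: `|H^d(N,…,N,ℓ_d,ℓ_{d+1},N)| = C(N+d,d) - C(N-ℓ_d+d-1,d)
- C(N-ℓ_{d+1}+d-1,d)`, where the first `d-1` parameters equal `N`. -/
theorem stmt19 (d N : ℕ) (hd : 3 ≤ d) (hN : 1 ≤ N) (ℓd ℓd1 : ℕ)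
    (hd1 : ℓd ≤ N) (hd2 : ℓd1 ≤ N) (hsum : N ≤ ℓd + ℓd1) :
    ((Hd d N (fun t : Fin (d + 1) =>
        if (t : ℕ) < d - 1 then N else if (t : ℕ) = d - 1 then ℓd else ℓd1)).card : ℤ) =
      ((N + d).choose d : ℤ) - ((N - ℓd + d - 1).choose d : ℤ) -
        ((N - ℓd1 + d - 1).choose d : ℤ) := by
  set ℓ : Fin (d + 1) → ℕ := fun t =>
    if (t : ℕ) < d - 1 then N else if (t : ℕ) = d - 1 then ℓd else ℓd1 with hℓ
  set p : Fin d := ⟨d - 1, by omega⟩ with hp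
  set q : Fin d := ⟨d - 2, by omega⟩ with hq
  have hpv : (p : ℕ) = d - 1 := by rw [hp]
  have hqv : (q : ℕ) = d - 2 := by rw [hq]
  have hqp : q ≠ p := by rw [Fin.ne_iff_vne, hpv, hqv]; omega
  have hℓN : ∀ t : Fin (d + 1), (t : ℕ) < d - 1 → ℓ t = N := by
    intro t ht; simp only [hℓ]; rw [if_pos ht]
  have hℓa : ∀ t : Fin (d + 1), (t : ℕ) = d - 1 → ℓ t = ℓd := by
    intro t ht; simp only [hℓ]; rw [if_neg (by omega), if_pos ht]
  have hℓb : ∀ t : Fin (d + 1), (t : ℕ) = d → ℓ t = ℓd1 := by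
    intro t ht; simp only [hℓ]; rw [if_neg (by omega), if_neg (by omega)]
  -- tail sums at p and q
  have htsp : ∀ ν : Fin d → ℕ, tailSum d ν p = 0 := by
    intro ν
    have hf : (univ.filter fun i : Fin d => (p : ℕ) < (i : ℕ)) = ∅ := by
      ext i
      simp only [mem_filter, mem_univ, true_and, notMem_empty, iff_false, not_lt, hpv]
      have := i.isLt; omega
    rw [tailSum, hf, sum_empty]
  have htsq : ∀ ν : Fin d → ℕ, tailSum d ν q = ν p := by
    intro ν
    have hf : (univ.filter fun i : Fin d => (q : ℕ) < (i : ℕ)) = {p} := by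
      ext i
      simp only [mem_filter, mem_univ, true_and, mem_singleton, Fin.ext_iff, hpv, hqv]
      have := i.isLt; omega
    rw [tailSum, hf, sum_singleton]
  have htlp : tailSumL d ℓ p = ℓd1 := by
    have hf : (univ.filter fun i : Fin (d + 1) => (p : ℕ) < (i : ℕ))
        = {(⟨d, by omega⟩ : Fin (d + 1))} := by
      ext i
      simp only [mem_filter, mem_univ, true_and, mem_singleton, Fin.ext_iff, hpv]
      have := i.isLt; omega
    rw [tailSumL, hf, sum_singleton, hℓb _ rfl]
  have htlq : tailSumL d ℓ q = ℓd + ℓd1 := by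
    have hf : (univ.filter fun i : Fin (d + 1) => (q : ℕ) < (i : ℕ))
        = {(⟨d - 1, by omega⟩ : Fin (d + 1)), (⟨d, by omega⟩ : Fin (d + 1))} := by
      ext i
      simp only [mem_filter, mem_univ, true_and, mem_insert, mem_singleton, Fin.ext_iff, hqv]
      have := i.isLt; omega
    rw [tailSumL, hf, Finset.sum_pair (by rw [Fin.ne_iff_vne]; show d - 1 ≠ d; omega),
      hℓa _ rfl, hℓb _ rfl]
  -- membership characterization
  have hmem : ∀ ν : Fin d → ℕ, ν ∈ Hd d N ℓ ↔
      (∑ i, ν i ≤ N ∧ ν p ≤ ℓd ∧ ν p ≤ ℓd1 ∧ ν q + 2 * ν p ≤ ℓd + ℓd1) := by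
    intro ν
    simp only [Hd, mem_filter, Fintype.mem_piFinset, mem_range]
    constructor
    · rintro ⟨hpi, h1, h2, h3, h4⟩
      refine ⟨h4, ?_, ?_, ?_⟩
      · have hℓp : ℓ p.castSucc = ℓd := hℓa _ (by rw [Fin.coe_castSucc, hpv])
        have := h1 p; rwa [hℓp] at this
      · have := h2 p; rw [htsp, htlp] at this; omega
      · have := h2 q; rwa [htsq, htlq] at this
    · rintro ⟨h0, h1, h2, h3⟩
      have hcoord : ∀ i : Fin d, ν i ≤ N := by
        intro i
        have := Finset.single_le_sum (f := ν) (fun i _ => Nat.zero_le _) (mem_univ i)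
        omega
      refine ⟨fun i => by have := hcoord i; omega, ?_, ?_, ?_, h0⟩
      · intro j
        rcases Nat.lt_or_ge (j : ℕ) (d - 1) with hj | hj
        · rw [hℓN _ (by rw [Fin.coe_castSucc]; exact hj)]; exact hcoord j
        · have hjv : (j : ℕ) = d - 1 := by have := j.isLt; omega
          rw [hℓa _ (by rw [Fin.coe_castSucc]; exact hjv)]
          have hje : j = p := by rw [Fin.ext_iff, hpv]; exact hjv
          rw [hje]; exact h1
      · intro j
        have hjlt := j.isLt
        rcases Nat.lt_trichotomy (j : ℕ) (d - 2) with hj | hj | hj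
        · have hnotin : j ∉ univ.filter (fun i : Fin d => (j : ℕ) < (i : ℕ)) := by simp
          have hb1 : ν j + tailSum d ν j ≤ ∑ i, ν i := by
            rw [tailSum, ← Finset.sum_insert hnotin]
            exact Finset.sum_le_sum_of_subset (subset_univ _)
          have hb2 : tailSum d ν j ≤ ∑ i, ν i := by
            rw [tailSum]; exact Finset.sum_le_sum_of_subset (subset_univ _)
          have hub : N + ℓd + ℓd1 ≤ tailSumL d ℓ j := by
            rw [tailSumL]
            have h3le := three_le_sum' (univ.filter fun i : Fin (d + 1) => (j : ℕ) < (i : ℕ)) ℓ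
              ⟨d - 2, by omega⟩ ⟨d - 1, by omega⟩ ⟨d, by omega⟩
              (by simp only [mem_filter, mem_univ, true_and]; show (j : ℕ) < d - 2; omega)
              (by simp only [mem_filter, mem_univ, true_and]; show (j : ℕ) < d - 1; omega)
              (by simp only [mem_filter, mem_univ, true_and]; show (j : ℕ) < d; omega)
              (by rw [Fin.ne_iff_vne]; show d - 2 ≠ d - 1; omega)
              (by rw [Fin.ne_iff_vne]; show d - 2 ≠ d; omega)
              (by rw [Fin.ne_iff_vne]; show d - 1 ≠ d; omega)
            rw [hℓN ⟨d - 2, by omega⟩ (by show d - 2 < d - 1; omega),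
              hℓa ⟨d - 1, by omega⟩ rfl, hℓb ⟨d, by omega⟩ rfl] at h3le
            omega
          omega
        · have hje : j = q := by rw [Fin.ext_iff, hqv]; exact hj
          rw [hje, htsq, htlq]; exact h3
        · have hjv : (j : ℕ) = d - 1 := by omega
          have hje : j = p := by rw [Fin.ext_iff, hpv]; exact hjv
          rw [hje, htsp, htlp]; omega
      · have h3le := three_le_sum' (univ : Finset (Fin (d + 1))) ℓ
          ⟨0, by omega⟩ ⟨d - 1, by omega⟩ ⟨d, by omega⟩
          (mem_univ _) (mem_univ _) (mem_univ _)
          (by rw [Fin.ne_iff_vne]; show 0 ≠ d - 1; omega)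
          (by rw [Fin.ne_iff_vne]; show 0 ≠ d; omega)
          (by rw [Fin.ne_iff_vne]; show d - 1 ≠ d; omega)
        rw [hℓN ⟨0, by omega⟩ (by show 0 < d - 1; omega),
          hℓa ⟨d - 1, by omega⟩ rfl, hℓb ⟨d, by omega⟩ rfl] at h3le
        omega
  -- the two bad sets
  set P1 := (Tset d N).filter (fun ν => ℓd1 < ν p) with hP1
  set P2 := (Tset d N).filter
    (fun ν => ν p ≤ ℓd1 ∧ (ℓd < ν p ∨ ℓd + ℓd1 < ν q + 2 * ν p)) with hP2
  have hHd : Hd d N ℓ = Tset d N \ (P1 ∪ P2) := by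
    ext ν
    rw [hmem ν]
    simp only [hP1, hP2, mem_sdiff, mem_union, mem_filter, mem_Tset]
    omega
  have hdisj : Disjoint P1 P2 := by
    rw [Finset.disjoint_left]
    intro ν h1 h2
    rw [hP1, mem_filter] at h1
    rw [hP2, mem_filter] at h2
    omega
  have hsubset : P1 ∪ P2 ⊆ Tset d N :=
    union_subset (filter_subset _ _) (filter_subset _ _)
  have hcard : (Hd d N ℓ).card + (P1.card + P2.card) = (Tset d N).card := by
    rw [hHd, ← card_union_of_disjoint hdisj]
    exact Finset.card_sdiff_add_card_eq_card hsubset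
  have hP1card : P1.card = (N - ℓd1 + d - 1).choose d := by
    rcases Nat.eq_or_lt_of_le hd2 with heq | hlt
    · have hempty : P1 = ∅ := by
        rw [hP1, Finset.filter_eq_empty_iff]
        intro ν hν
        rw [mem_Tset] at hν
        have := Finset.single_le_sum (f := ν) (fun i _ => Nat.zero_le _) (mem_univ p)
        omega
      rw [hempty, card_empty, Nat.choose_eq_zero_of_lt (by omega)]
    · rw [show N - ℓd1 + d - 1 = (N - ℓd1 - 1) + d from by omega, ← Tcard d (N - ℓd1 - 1), hP1]
      refine Finset.card_bij' (fun ν _ => Function.update ν p (ν p - (ℓd1 + 1)))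
        (fun μ _ => Function.update μ p (μ p + (ℓd1 + 1))) ?_ ?_ ?_ ?_
      · intro ν hν
        beta_reduce
        rw [mem_filter, mem_Tset] at hν
        rw [mem_Tset]
        have hs := sum_update_eq ν p (ν p - (ℓd1 + 1))
        have hle := Finset.single_le_sum (f := ν) (fun i _ => Nat.zero_le _) (mem_univ p)
        omega
      · intro μ hμ
        beta_reduce
        rw [mem_Tset] at hμ
        rw [mem_filter, mem_Tset]
        have hs := sum_update_eq μ p (μ p + (ℓd1 + 1))
        rw [Function.update_self]
        omega
      · intro ν hν
        beta_reduce
        rw [mem_filter] at hν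
        funext i
        rcases eq_or_ne i p with rfl | hne
        · rw [Function.update_self, Function.update_self]
          omega
        · rw [Function.update_of_ne hne, Function.update_of_ne hne]
      · intro μ hμ
        beta_reduce
        funext i
        rcases eq_or_ne i p with rfl | hne
        · rw [Function.update_self, Function.update_self]
          omega
        · rw [Function.update_of_ne hne, Function.update_of_ne hne]
  have hP2card : P2.card = (N - ℓd + d - 1).choose d := by
    rcases Nat.eq_or_lt_of_le hd1 with heq | hlt
    · have hempty : P2 = ∅ := by
        rw [hP2, Finset.filter_eq_empty_iff]
        intro ν hν
        rw [mem_Tset] at hν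
        have h1 := Finset.single_le_sum (f := ν) (fun i _ => Nat.zero_le _) (mem_univ p)
        have h2 := two_le_sum ν q p hqp
        omega
      rw [hempty, card_empty, Nat.choose_eq_zero_of_lt (by omega)]
    · rw [show N - ℓd + d - 1 = (N - ℓd - 1) + d from by omega, ← Tcard d (N - ℓd - 1), hP2]
      refine Finset.card_bij'
        (fun ν _ => Function.update (Function.update ν q
            (ν q - (ℓd + 1 - min (ℓd + 1) (ℓd + ℓd1 + 1 - (ν q + ν p))))) p
            (ν p - min (ℓd + 1) (ℓd + ℓd1 + 1 - (ν q + ν p))))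
        (fun μ _ => Function.update (Function.update μ q
            (μ q + (ℓd + 1 - min (ℓd + 1) (ℓd + ℓd1 - (μ q + μ p + ℓd))))) p
            (μ p + min (ℓd + 1) (ℓd + ℓd1 - (μ q + μ p + ℓd)))) ?_ ?_ ?_ ?_
      · intro ν hν
        beta_reduce
        rw [mem_filter, mem_Tset] at hν
        rw [mem_Tset]
        have hs := sum_update2_eq ν q p hqp
          (ν q - (ℓd + 1 - min (ℓd + 1) (ℓd + ℓd1 + 1 - (ν q + ν p))))
          (ν p - min (ℓd + 1) (ℓd + ℓd1 + 1 - (ν q + ν p)))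
        have h2 := two_le_sum ν q p hqp
        omega
      · intro μ hμ
        beta_reduce
        rw [mem_Tset] at hμ
        rw [mem_filter, mem_Tset]
        have hs := sum_update2_eq μ q p hqp
          (μ q + (ℓd + 1 - min (ℓd + 1) (ℓd + ℓd1 - (μ q + μ p + ℓd))))
          (μ p + min (ℓd + 1) (ℓd + ℓd1 - (μ q + μ p + ℓd)))
        have h2 := two_le_sum μ q p hqp
        rw [Function.update_self, Function.update_of_ne hqp, Function.update_self]
        omega
      · intro ν hν
        beta_reduce
        rw [mem_filter, mem_Tset] at hν
        have h2 := two_le_sum ν q p hqp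
        have e1 : (Function.update (Function.update ν q
            (ν q - (ℓd + 1 - min (ℓd + 1) (ℓd + ℓd1 + 1 - (ν q + ν p))))) p
            (ν p - min (ℓd + 1) (ℓd + ℓd1 + 1 - (ν q + ν p)))) p
            = ν p - min (ℓd + 1) (ℓd + ℓd1 + 1 - (ν q + ν p)) := Function.update_self _ _ _
        have e2 : (Function.update (Function.update ν q
            (ν q - (ℓd + 1 - min (ℓd + 1) (ℓd + ℓd1 + 1 - (ν q + ν p))))) p
            (ν p - min (ℓd + 1) (ℓd + ℓd1 + 1 - (ν q + ν p)))) q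
            = ν q - (ℓd + 1 - min (ℓd + 1) (ℓd + ℓd1 + 1 - (ν q + ν p))) := by
          rw [Function.update_of_ne hqp, Function.update_self]
        funext i
        rcases eq_or_ne i p with rfl | h1
        · rw [Function.update_self, e1, e2]
          omega
        rcases eq_or_ne i q with rfl | h2
        · rw [Function.update_of_ne hqp, Function.update_self, e1, e2]
          omega
        · rw [Function.update_of_ne h1, Function.update_of_ne h2,
            Function.update_of_ne h1, Function.update_of_ne h2]
      · intro μ hμ
        beta_reduce
        rw [mem_Tset] at hμ
        have h2 := two_le_sum μ q p hqp
        have e1 : (Function.update (Function.update μ q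
            (μ q + (ℓd + 1 - min (ℓd + 1) (ℓd + ℓd1 - (μ q + μ p + ℓd))))) p
            (μ p + min (ℓd + 1) (ℓd + ℓd1 - (μ q + μ p + ℓd)))) p
            = μ p + min (ℓd + 1) (ℓd + ℓd1 - (μ q + μ p + ℓd)) := Function.update_self _ _ _
        have e2 : (Function.update (Function.update μ q
            (μ q + (ℓd + 1 - min (ℓd + 1) (ℓd + ℓd1 - (μ q + μ p + ℓd))))) p
            (μ p + min (ℓd + 1) (ℓd + ℓd1 - (μ q + μ p + ℓd)))) q
            = μ q + (ℓd + 1 - min (ℓd + 1) (ℓd + ℓd1 - (μ q + μ p + ℓd))) := by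
          rw [Function.update_of_ne hqp, Function.update_self]
        funext i
        rcases eq_or_ne i p with rfl | h1
        · rw [Function.update_self, e1, e2]
          omega
        rcases eq_or_ne i q with rfl | h2
        · rw [Function.update_of_ne hqp, Function.update_self, e1, e2]
          omega
        · rw [Function.update_of_ne h1, Function.update_of_ne h2,
            Function.update_of_ne h1, Function.update_of_ne h2]
  have hTc := Tcard d N
  rw [hP1card, hP2card, hTc] at hcard
  have hc2 : (N - ℓd1 + d - 1).choose d ≤ (N + d).choose d := by omega
  omega
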